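/- Let {F_j}_{j=1}^{mn} be an orthonormal basis of M_{m,n}(ℂ) under the trace inner product, and let L(X) = ∑_{j=1}^{mn−1} γ_j F_j X F_j† − γ_{mn} F_{mn} X F_{mn}† with all γ_j ≥ 0. Fix 1 ≤ k ≤ min{m,n} and suppose ξ_k := 1 − max W_k(F_{mn}† F_{mn}) > 0. If γ_i < ξ_k^{-1} γ_{mn} max W_k(F_{mn}† F_{mn}) for all i = 1, …, mn−1, then L is not k-positive. -/

import Mathlib

open Matrix ComplexOrder

/-- The maximum of the `k`-numerical range of a matrix `A`. -/
noncomputable def maxWk {N : ℕ} (k : ℕ) (A : Matrix (Fin N) (Fin N) ℂ) : ℝ :=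
  sSup {t : ℝ | ∃ f : Fin k → (Fin N → ℂ),
    (∀ i j, star (f i) ⬝ᵥ f j = if i = j then 1 else 0) ∧
    t = (∑ j, star (f j) ⬝ᵥ A.mulVec (f j)).re}

lemma maxWk_set_nonempty {N k : ℕ} (hkn : k ≤ N) (A : Matrix (Fin N) (Fin N) ℂ) :
    {t : ℝ | ∃ f : Fin k → (Fin N → ℂ),
      (∀ i j, star (f i) ⬝ᵥ f j = if i = j then 1 else 0) ∧
      t = (∑ j, star (f j) ⬝ᵥ A.mulVec (f j)).re}.Nonempty := by
  refine ⟨_, fun j => Pi.single (Fin.castLE hkn j) 1, fun i j => ?_, rfl⟩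
  simp only [dotProduct, Pi.star_apply, Pi.single_apply, apply_ite (star : ℂ → ℂ), star_one,
    star_zero, ite_mul, one_mul, zero_mul, mul_ite, mul_one, mul_zero]
  rw [Finset.sum_ite_eq' Finset.univ]
  simp [Fin.castLE_inj]
  rcases eq_or_ne i j with h | h
  · simp [h]
  · simp [h, Ne.symm h]

lemma basis_expand {m n : ℕ} (F : Fin (m * n) → Matrix (Fin m) (Fin n) ℂ)
    (hF : ∀ r s, (F r * (F s)ᴴ).trace = if r = s then 1 else 0)
    (G : Matrix (Fin m) (Fin n) ℂ) (hmn : 0 < m * n) :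
    ∃ d : Fin (m * n) → ℂ, ∑ j, d j • F j = G := by
  have : Nonempty (Fin (m * n)) := ⟨⟨0, hmn⟩⟩
  have hli : LinearIndependent ℂ F := by
    rw [Fintype.linearIndependent_iff]
    intro g hg i
    have h2 := congrArg (fun X => (X * (F i)ᴴ).trace) hg
    simpa [Matrix.sum_mul, Matrix.trace_sum, Matrix.smul_mul, Matrix.trace_smul, hF,
      Finset.sum_ite_eq', smul_eq_mul] using h2
  have hcard : Fintype.card (Fin (m * n)) = Module.finrank ℂ (Matrix (Fin m) (Fin n) ℂ) := by
    simp [Module.finrank_matrix, Module.finrank_self]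
  let B := basisOfLinearIndependentOfCardEqFinrank hli hcard
  refine ⟨fun j => B.repr G j, ?_⟩
  have := B.sum_repr G
  rwa [coe_basisOfLinearIndependentOfCardEqFinrank] at this


lemma quad_factor1 {κ : Type*} [Fintype κ] (w a : κ → ℂ) :
    ∑ p, ∑ q, star (w p) * (a p * star (a q)) * w q
      = (∑ p, star (w p) * a p) * star (∑ q, star (w q) * a q) := by
  have hstar : star (∑ q, star (w q) * a q) = ∑ q, star (a q) * w q := by
    rw [star_sum]
    exact Finset.sum_congr rfl fun q _ => by rw [star_mul', star_star, mul_comm]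
  rw [hstar, Finset.sum_mul]
  refine Finset.sum_congr rfl fun p _ => ?_
  rw [Finset.mul_sum]
  exact Finset.sum_congr rfl fun q _ => by ring

lemma quad_factor {ι κ : Type*} [Fintype ι] [Fintype κ] (w : κ → ℂ)
    (a : ι → κ → ℂ) (g : ι → ℂ) (s : Finset ι) :
    ∑ p, ∑ q, star (w p) * (∑ j ∈ s, g j * (a j p * star (a j q))) * w q
      = ∑ j ∈ s, g j * ((∑ p, star (w p) * a j p) * star (∑ p, star (w p) * a j p)) := by
  have h1 : ∀ p q, star (w p) * (∑ j ∈ s, g j * (a j p * star (a j q))) * w q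
      = ∑ j ∈ s, star (w p) * (g j * (a j p * star (a j q))) * w q := by
    intro p q
    rw [Finset.mul_sum, Finset.sum_mul]
  simp only [h1]
  calc ∑ p, ∑ q, ∑ j ∈ s, star (w p) * (g j * (a j p * star (a j q))) * w q
      = ∑ p, ∑ j ∈ s, ∑ q, star (w p) * (g j * (a j p * star (a j q))) * w q :=
        Finset.sum_congr rfl fun p _ => Finset.sum_comm
    _ = ∑ j ∈ s, ∑ p, ∑ q, star (w p) * (g j * (a j p * star (a j q))) * w q :=
        Finset.sum_comm
    _ = _ := by
        refine Finset.sum_congr rfl fun j _ => ?_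
        have hq1 := quad_factor1 w (a j)
        calc ∑ p, ∑ q, star (w p) * (g j * (a j p * star (a j q))) * w q
            = g j * ∑ p, ∑ q, star (w p) * (a j p * star (a j q)) * w q := by
              rw [Finset.mul_sum]
              refine Finset.sum_congr rfl fun p _ => ?_
              rw [Finset.mul_sum]
              exact Finset.sum_congr rfl fun q _ => by ring
          _ = _ := by rw [hq1]

lemma block_entry {m n : ℕ} (Fj : Matrix (Fin m) (Fin n) ℂ) (x y : Fin n → ℂ)
    (s t' : Fin m) :
    (Fj * (Matrix.of fun a b => x a * star (y b)) * Fjᴴ) s t'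
      = (Fj *ᵥ x) s * star ((Fj *ᵥ y) t') := by
  simp only [Matrix.mul_apply, Matrix.conjTranspose_apply, Matrix.of_apply, Matrix.mulVec,
    dotProduct, star_sum, star_mul', Finset.sum_mul, Finset.mul_sum]
  refine Finset.sum_congr rfl fun b _ => ?_
  refine Finset.sum_congr rfl fun a _ => ?_
  ring

lemma trace_formula {m n k' : ℕ} (Fe Fj : Matrix (Fin m) (Fin n) ℂ) (f : Fin k' → Fin n → ℂ) :
    ∑ u, star (Fe *ᵥ f u) ⬝ᵥ (Fj *ᵥ f u)
      = (Fj * (Fe * ((Matrix.of f)ᴴ * Matrix.of f)ᵀ)ᴴ).trace := by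
  simp only [Matrix.trace, Matrix.diag_apply, Matrix.mul_apply, Matrix.conjTranspose_apply,
    Matrix.transpose_apply, Matrix.of_apply, dotProduct, Matrix.mulVec, Pi.star_apply,
    star_sum, star_mul', star_star, Finset.sum_mul, Finset.mul_sum]
  rw [Finset.sum_comm]
  refine Finset.sum_congr rfl fun s _ => ?_
  rw [Finset.sum_comm]
  refine Finset.sum_congr rfl fun b _ => ?_
  rw [Finset.sum_comm]
  refine Finset.sum_congr rfl fun a _ => ?_
  refine Finset.sum_congr rfl fun u _ => ?_
  ring

/-- with a single negative term (`p = mn − 1`), if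
`γ_i < ξ_k⁻¹ γ_{mn} max W_k(F_{mn}† F_{mn})` for all `i ≠ e`, then `L` is not
`k`-positive. -/
theorem stmt_10 {m n k : ℕ} (hk1 : 1 ≤ k) (hkm : k ≤ m) (hkn : k ≤ n)
    (F : Fin (m * n) → Matrix (Fin m) (Fin n) ℂ)
    (hF : ∀ r s, (F r * (F s)ᴴ).trace = if r = s then 1 else 0)
    (γ : Fin (m * n) → ℝ) (hγ : ∀ j, 0 ≤ γ j)
    (e : Fin (m * n)) (he : (e : ℕ) = m * n - 1)
    (L : Matrix (Fin n) (Fin n) ℂ → Matrix (Fin m) (Fin m) ℂ)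
    (hL : ∀ X, L X =
      (∑ j ∈ Finset.univ.filter (fun j : Fin (m * n) => j ≠ e),
        (γ j : ℂ) • (F j * X * (F j)ᴴ)) - (γ e : ℂ) • (F e * X * (F e)ᴴ))
    (hξ : 0 < 1 - maxWk k ((F e)ᴴ * F e))
    (hγsmall : ∀ i, i ≠ e →
      γ i < (1 - maxWk k ((F e)ᴴ * F e))⁻¹ * (γ e * maxWk k ((F e)ᴴ * F e))) :
    ¬ (∀ A : Matrix (Fin k × Fin n) (Fin k × Fin n) ℂ, A.PosSemidef →
      (Matrix.of fun u v : Fin k × Fin m =>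
        L (Matrix.of fun a b => A (u.1, a) (v.1, b)) u.2 v.2).PosSemidef) := by
  intro hpos
  have hmn : 0 < m * n := e.pos
  set A0 : Matrix (Fin n) (Fin n) ℂ := (F e)ᴴ * F e with hA0
  set μ : ℝ := maxWk k A0 with hμdef
  set ξ : ℝ := 1 - μ with hξdef
  -- degenerate case m*n = 1
  by_cases hone : m * n = 1
  · have hm1 : m = 1 := Nat.le_antisymm (Nat.le_of_dvd one_pos ⟨n, hone.symm⟩) (hk1.trans hkm)
    have hn1 : n = 1 := Nat.le_antisymm (Nat.le_of_dvd one_pos ⟨m, by rw [mul_comm]; exact hone.symm⟩) (hk1.trans hkn)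
    have hk' : k = 1 := le_antisymm (hm1 ▸ hkm) hk1
    subst hm1 hn1 hk'
    -- show μ = 1, contradicting hξ
    have hFe : F e 0 0 * star (F e 0 0) = 1 := by
      have := hF e e
      simpa [Matrix.trace, Matrix.mul_apply, Fin.sum_univ_one] using this
    have hA00 : A0 0 0 = 1 := by
      rw [hA0]
      simp only [Matrix.mul_apply, Matrix.conjTranspose_apply, Fin.sum_univ_one]
      rw [mul_comm]; exact hFe
    have hμ1 : μ = 1 := by
      have hset : {t : ℝ | ∃ f : Fin 1 → (Fin 1 → ℂ),
          (∀ i j, star (f i) ⬝ᵥ f j = if i = j then 1 else 0) ∧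
          t = (∑ j, star (f j) ⬝ᵥ A0.mulVec (f j)).re} = {1} := by
        ext t
        simp only [Set.mem_setOf_eq, Set.mem_singleton_iff]
        constructor
        · rintro ⟨f, hf, rfl⟩
          have h00 := hf 0 0
          simp only [dotProduct, Fin.sum_univ_one, Pi.star_apply, if_pos rfl] at h00
          have : (∑ j, star (f j) ⬝ᵥ A0.mulVec (f j)) = 1 := by
            rw [Fin.sum_univ_one]
            simp only [dotProduct, mulVec, Fin.sum_univ_one, Pi.star_apply, hA00, one_mul]
            exact h00
          rw [this]; simp
        · rintro rfl
          refine ⟨fun _ _ => 1, fun i j => ?_, ?_⟩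
          · simp [Subsingleton.elim i j, dotProduct]
          · simp [dotProduct, mulVec, Fin.sum_univ_one, hA00]
      rw [hμdef, maxWk, hset, csSup_singleton]
    rw [hξdef, hμ1] at hξ; norm_num at hξ
  -- main case
  have h2 : 2 ≤ m * n := by omega
  have : Nontrivial (Fin (m * n)) := Fin.nontrivial_iff_two_le.mpr h2
  obtain ⟨i0, hi0⟩ := exists_ne e
  have hξpos : 0 < ξ := hξ
  have hξinv : 0 < ξ⁻¹ := inv_pos.mpr hξpos
  have hγeμ : 0 < γ e * μ := by
    by_contra h
    push_neg at h
    have := hγsmall i0 hi0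
    nlinarith [hγ i0]
  have hγe : 0 < γ e := by
    rcases (lt_or_ge 0 (γ e)) with h | h
    · exact h
    · exfalso; nlinarith [hγ e]
  have hμpos : 0 < μ := by nlinarith
  have hμlt1 : μ < 1 := by rw [hξdef] at hξpos; linarith
  -- max of γ over i ≠ e
  set filt := Finset.univ.filter (fun j : Fin (m * n) => j ≠ e) with hfilt
  have hfne : filt.Nonempty := ⟨i0, by simp [hfilt, hi0]⟩
  set G : ℝ := filt.sup' hfne γ with hGdef
  have hGle : ∀ j ∈ filt, γ j ≤ G := fun j hj => Finset.le_sup' γ hj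
  have hGlt : G < ξ⁻¹ * (γ e * μ) := by
    obtain ⟨i1, hi1, hGi⟩ := Finset.exists_mem_eq_sup' hfne γ
    rw [hGdef, hGi]
    exact hγsmall i1 (by simpa [hfilt] using hi1)
  have hG0 : 0 ≤ G := by
    obtain ⟨i1, hi1, hGi⟩ := Finset.exists_mem_eq_sup' hfne γ
    rw [hGdef, hGi]; exact hγ i1
  set δ : ℝ := ξ⁻¹ * (γ e * μ) - G with hδdef
  have hδpos : 0 < δ := by rw [hδdef]; linarith
  have hGγe : 0 < G + γ e := by linarith
  set ε : ℝ := min (μ / 2) (ξ * δ / (2 * (G + γ e))) with hεdef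
  have hεpos : 0 < ε := by
    apply lt_min (by linarith)
    positivity
  -- pick t close to the sup
  obtain ⟨t, htS, htgt⟩ := exists_lt_of_lt_csSup (maxWk_set_nonempty hkn A0)
    (show μ - ε < sSup _ from by
      have : μ - ε < μ := by linarith
      rw [hμdef, maxWk] at this; exact this)
  obtain ⟨f, hf, ht⟩ := htS
  have htpos : 0 < t := by
    have : μ / 2 ≤ μ - ε := by
      have := min_le_left (μ / 2) (ξ * δ / (2 * (G + γ e)))
      rw [hεdef]; linarith [this]
    linarith
  -- the witness state A
  set A : Matrix (Fin k × Fin n) (Fin k × Fin n) ℂ :=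
    Matrix.of (fun p q : Fin k × Fin n => f p.1 p.2 * star (f q.1 q.2)) with hAdef
  have hApsd : A.PosSemidef := by
    have : A = (Matrix.of (fun (p : Fin k × Fin n) (_ : Fin 1) => f p.1 p.2)) *
        (Matrix.of (fun (p : Fin k × Fin n) (_ : Fin 1) => f p.1 p.2))ᴴ := by
      ext p q
      simp [Matrix.mul_apply, Matrix.conjTranspose_apply, Fin.sum_univ_one, hAdef]
    rw [this]
    exact Matrix.posSemidef_self_mul_conjTranspose _
  have hM := hpos A hApsd
  -- vectors
  set v : Fin (m * n) → (Fin k × Fin m) → ℂ :=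
    fun j p => (F j).mulVec (f p.1) p.2 with hvdef
  set c : Fin (m * n) → ℂ := fun j => ∑ p : Fin k × Fin m, star (v e p) * v j p with hcdef
  have hQ := hM.dotProduct_mulVec_nonneg (v e)
  -- key identity
  have key : star (v e) ⬝ᵥ (Matrix.of fun u v' : Fin k × Fin m =>
        L (Matrix.of fun a b => A (u.1, a) (v'.1, b)) u.2 v'.2).mulVec (v e) =
      (∑ j ∈ filt, (γ j : ℂ) * (c j * star (c j))) - (γ e : ℂ) * (c e * star (c e)) := by
    have hMval : ∀ p q : Fin k × Fin m,
        (Matrix.of fun u v' : Fin k × Fin m =>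
          L (Matrix.of fun a b => A (u.1, a) (v'.1, b)) u.2 v'.2) p q
        = (∑ j ∈ filt, (γ j : ℂ) * (v j p * star (v j q)))
            - (γ e : ℂ) * (v e p * star (v e q)) := by
      intro p q
      show L (Matrix.of fun a b => A (p.1, a) (q.1, b)) p.2 q.2 = _
      rw [show (Matrix.of fun a b => A (p.1, a) (q.1, b))
          = (Matrix.of fun a b => f p.1 a * star (f q.1 b)) from rfl]
      rw [hL]
      simp only [Matrix.sub_apply, Matrix.sum_apply, Matrix.smul_apply, smul_eq_mul]
      congr 1
      · refine Finset.sum_congr rfl fun j _ => ?_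
        rw [block_entry (F j) (f p.1) (f q.1) p.2 q.2]
      · rw [block_entry (F e) (f p.1) (f q.1) p.2 q.2]
    calc star (v e) ⬝ᵥ (Matrix.of fun u v' : Fin k × Fin m =>
          L (Matrix.of fun a b => A (u.1, a) (v'.1, b)) u.2 v'.2).mulVec (v e)
        = ∑ p, ∑ q, star (v e p) * ((Matrix.of fun u v' : Fin k × Fin m =>
            L (Matrix.of fun a b => A (u.1, a) (v'.1, b)) u.2 v'.2) p q) * (v e q) := by
          simp only [dotProduct, Matrix.mulVec, Pi.star_apply, Finset.mul_sum]
          exact Finset.sum_congr rfl fun p _ => Finset.sum_congr rfl fun q _ => by ring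
      _ = ∑ p, ∑ q, star (v e p) *
            ((∑ j ∈ filt, (γ j : ℂ) * (v j p * star (v j q)))
              - (γ e : ℂ) * (v e p * star (v e q))) * (v e q) := by
          exact Finset.sum_congr rfl fun p _ => Finset.sum_congr rfl fun q _ => by
            rw [hMval p q]
      _ = (∑ p, ∑ q, star (v e p) * (∑ j ∈ filt, (γ j : ℂ) * (v j p * star (v j q))) * (v e q))
          - (∑ p, ∑ q, star (v e p) * ((γ e : ℂ) * (v e p * star (v e q))) * (v e q)) := by
          rw [← Finset.sum_sub_distrib]
          refine Finset.sum_congr rfl fun p _ => ?_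
          rw [← Finset.sum_sub_distrib]
          exact Finset.sum_congr rfl fun q _ => by ring
      _ = (∑ j ∈ filt, (γ j : ℂ) * (c j * star (c j))) - (γ e : ℂ) * (c e * star (c e)) := by
          congr 1
          · rw [quad_factor (v e) (fun j => v j) (fun j => (γ j : ℂ)) filt]
          · have h2 : ∑ p, ∑ q, star (v e p) * ((γ e : ℂ) * (v e p * star (v e q))) * (v e q)
                = (γ e : ℂ) * ∑ p, ∑ q, star (v e p) * (v e p * star (v e q)) * (v e q) := by
              rw [Finset.mul_sum]
              refine Finset.sum_congr rfl fun p _ => ?_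
              rw [Finset.mul_sum]
              exact Finset.sum_congr rfl fun q _ => by ring
            rw [h2, quad_factor1 (v e) (v e)]
  -- c e is real with value t
  have hterm : ∀ u : Fin k, star (f u) ⬝ᵥ A0 *ᵥ f u
      = star ((F e) *ᵥ f u) ⬝ᵥ ((F e) *ᵥ f u) := by
    intro u
    rw [hA0, ← Matrix.mulVec_mulVec, Matrix.dotProduct_mulVec, ← Matrix.star_mulVec]
  have hnorm : ∀ (N : ℕ) (x : Fin N → ℂ),
      star x ⬝ᵥ x = ((∑ s, Complex.normSq (x s) : ℝ) : ℂ) := by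
    intro N x
    simp only [dotProduct, Pi.star_apply, Complex.ofReal_sum, Complex.star_def]
    exact Finset.sum_congr rfl fun s _ => (Complex.normSq_eq_conj_mul_self).symm
  have hcexp : ∀ j, c j = ∑ u, star ((F e) *ᵥ f u) ⬝ᵥ (F j *ᵥ f u) := by
    intro j
    show (∑ p : Fin k × Fin m, star (v e p) * v j p) = _
    rw [Fintype.sum_prod_type]
    refine Finset.sum_congr rfl fun u _ => ?_
    simp [dotProduct, hvdef]
  have htval : t = ∑ u, ∑ s, Complex.normSq ((F e *ᵥ f u) s) := by
    rw [ht]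
    rw [Finset.sum_congr rfl fun u _ => hterm u]
    rw [Finset.sum_congr rfl fun u _ => hnorm m ((F e) *ᵥ f u)]
    rw [← Complex.ofReal_sum]
    rw [Complex.ofReal_re]
  have hce : c e = (t : ℂ) := by
    rw [hcexp e]
    rw [Finset.sum_congr rfl fun u _ => hnorm m ((F e) *ᵥ f u)]
    rw [← Complex.ofReal_sum, htval]
  -- Parseval
  set Φ : Matrix (Fin k) (Fin n) ℂ := Matrix.of f with hΦdef
  have hΦ : Φ * Φᴴ = 1 := by
    ext u w
    have h := hf u w
    simp only [dotProduct, Pi.star_apply] at h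
    simp only [hΦdef, Matrix.mul_apply, Matrix.conjTranspose_apply, Matrix.of_apply,
      Matrix.one_apply]
    calc ∑ b, f u b * star (f w b) = star (∑ b, star (f u b) * f w b) := by
          rw [star_sum]
          exact Finset.sum_congr rfl fun b _ => by rw [star_mul', star_star, mul_comm]
      _ = _ := by rw [h]; split <;> simp
  set P : Matrix (Fin n) (Fin n) ℂ := (Φᴴ * Φ)ᵀ with hPdef
  have hPherm : Pᴴ = P := by
    ext a b
    simp only [hPdef, Matrix.conjTranspose_apply, Matrix.transpose_apply, Matrix.mul_apply,
      star_sum, star_mul', star_star]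
    exact Finset.sum_congr rfl fun u _ => by ring
  have hPP : P * P = P := by
    rw [hPdef, ← Matrix.transpose_mul]
    congr 1
    rw [Matrix.mul_assoc, ← Matrix.mul_assoc Φ, hΦ, Matrix.one_mul]
  set Gm : Matrix (Fin m) (Fin n) ℂ := F e * P with hGmdef
  have hctr : ∀ j, c j = (F j * Gmᴴ).trace := by
    intro j
    rw [hcexp j, hGmdef, hPdef, hΦdef]
    exact trace_formula (F e) (F j) f
  obtain ⟨d, hd⟩ := basis_expand F hF Gm hmn
  have hcd : ∀ j, c j = star (d j) := by
    intro j
    rw [hctr j, ← hd]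
    rw [Matrix.conjTranspose_sum]
    simp only [Matrix.conjTranspose_smul, Matrix.mul_sum, Matrix.mul_smul,
      Matrix.trace_sum, Matrix.trace_smul, hF, smul_eq_mul]
    simp [Finset.sum_ite_eq']
  have htrGG : (Gm * Gmᴴ).trace = c e := by
    have h2 : Gm * Gmᴴ = F e * Gmᴴ := by
      rw [hGmdef, Matrix.conjTranspose_mul, hPherm]
      rw [← Matrix.mul_assoc, Matrix.mul_assoc (F e) P P, hPP, ← Matrix.mul_assoc]
    rw [h2, ← hctr e]
  have htrGG2 : (Gm * Gmᴴ).trace = ∑ j, d j * star (d j) := by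
    calc (Gm * Gmᴴ).trace = ((∑ j, d j • F j) * Gmᴴ).trace := by rw [hd]
      _ = ∑ j, d j * (F j * Gmᴴ).trace := by
          rw [Matrix.sum_mul, Matrix.trace_sum]
          exact Finset.sum_congr rfl fun j _ => by
            rw [Matrix.smul_mul, Matrix.trace_smul, smul_eq_mul]
      _ = ∑ j, d j * star (d j) := Finset.sum_congr rfl fun j _ => by
            rw [← hctr j, hcd j]
  have hpars : ∑ j, c j * star (c j) = (t : ℂ) := by
    calc ∑ j, c j * star (c j) = ∑ j, d j * star (d j) := by
          refine Finset.sum_congr rfl fun j _ => ?_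
          rw [hcd j, star_star, mul_comm]
      _ = (Gm * Gmᴴ).trace := htrGG2.symm
      _ = c e := htrGG
      _ = (t : ℂ) := hce
  -- derive the real inequality
  have hnsq : ∀ j, c j * star (c j) = ((Complex.normSq (c j) : ℝ) : ℂ) := by
    intro j; rw [Complex.star_def, Complex.mul_conj]
  have hsumfilt : ∑ j ∈ filt, Complex.normSq (c j) = t - t * t := by
    have h1 : ∑ j, Complex.normSq (c j) = t := by
      have := hpars
      rw [Finset.sum_congr rfl (fun j _ => hnsq j)] at this
      push_cast at this
      exact_mod_cast this
    have h2 : Complex.normSq (c e) = t * t := by rw [hce]; simp [Complex.normSq_ofReal]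
    have h3 : ∑ j ∈ filt, Complex.normSq (c j) + Complex.normSq (c e) =
        ∑ j, Complex.normSq (c j) := by
      rw [hfilt, Finset.filter_ne']
      exact Finset.sum_erase_add _ _ (Finset.mem_univ e)
    linarith
  -- real part of the quadratic form
  have hre : (star (v e) ⬝ᵥ (Matrix.of fun u v' : Fin k × Fin m =>
        L (Matrix.of fun a b => A (u.1, a) (v'.1, b)) u.2 v'.2).mulVec (v e)).re =
      (∑ j ∈ filt, γ j * Complex.normSq (c j)) - γ e * (t * t) := by
    rw [key]
    rw [Finset.sum_congr rfl (fun j _ => by rw [hnsq j])]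
    rw [hnsq e, hce]
    push_cast
    simp [Complex.normSq_ofReal]
  have h0le : (0:ℝ) ≤ (∑ j ∈ filt, γ j * Complex.normSq (c j)) - γ e * (t * t) := by
    rw [← hre]
    have := (Complex.le_def.mp hQ).1
    simpa using this
  -- the contradiction
  have hub : (∑ j ∈ filt, γ j * Complex.normSq (c j)) ≤ G * (t - t * t) := by
    calc ∑ j ∈ filt, γ j * Complex.normSq (c j)
        ≤ ∑ j ∈ filt, G * Complex.normSq (c j) := by
          refine Finset.sum_le_sum fun j hj => ?_
          exact mul_le_mul_of_nonneg_right (hGle j hj) (Complex.normSq_nonneg _)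
      _ = G * (t - t * t) := by rw [← Finset.mul_sum, hsumfilt]
  have hεle : ε ≤ ξ * δ / (2 * (G + γ e)) := min_le_right _ _
  clear_value G δ ε ξ μ
  have hneg : G * (1 - t) - γ e * t < 0 := by
    have hxi : ξ⁻¹ * ξ = 1 := inv_mul_cancel₀ (ne_of_gt hξpos)
    have hG : G = ξ⁻¹ * (γ e * μ) - δ := by rw [hδdef]; ring
    have hμt : μ - t < ε := by linarith
    have he1 : G * (1 - t) - γ e * t = (G * ξ - γ e * μ) + (G + γ e) * (μ - t) := by
      rw [hξdef]; ring
    have h1 : G * ξ - γ e * μ = -(δ * ξ) := by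
      rw [hG]; linear_combination (γ e * μ) * hxi
    have h2 : (G + γ e) * (μ - t) ≤ (G + γ e) * ε :=
      mul_le_mul_of_nonneg_left (le_of_lt hμt) (le_of_lt hGγe)
    have h3 : (G + γ e) * ε ≤ ξ * δ / 2 := by
      rw [hεdef]
      calc (G + γ e) * min (μ / 2) (ξ * δ / (2 * (G + γ e)))
          ≤ (G + γ e) * (ξ * δ / (2 * (G + γ e))) :=
            mul_le_mul_of_nonneg_left (min_le_right _ _) (le_of_lt hGγe)
        _ = ξ * δ / 2 := by
            field_simp
    have h4 : 0 < δ * ξ := mul_pos hδpos hξpos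
    linarith
  have hfin : (∑ j ∈ filt, γ j * Complex.normSq (c j)) - γ e * (t * t) < 0 := by
    have heq : G * (t - t * t) - γ e * (t * t) = t * (G * (1 - t) - γ e * t) := by ring
    have h4 : t * (G * (1 - t) - γ e * t) < 0 := mul_neg_of_pos_of_neg htpos hneg
    linarith
  linarith
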